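/- Let K_1, K_2 be compact Hausdorff spaces, E_1, E_2 Banach spaces, H_1 ⊆ C(K_1, E_1) and H_2 ⊆ C(K_2, E_2) closed subspaces, and T : H_1 → H_2 a bounded linear into isomorphism. Fix a nonzero vector e ∈ E_1 and a sequence (f_i) of real-valued continuous functions on K_1 such that each h_i := f_i ⊗ e (the function x ↦ f_i(x)·e) belongs to H_1. Suppose there exists C ∈ ℝ such that for every n ∈ ℕ and every choice of signs α_1,...,α_n ∈ {−1, 1}, ||∑_{i=1}^n α_i h_i|| < C. Suppose further that there exist y ∈ K_2 and ε > 0 such that ||(T h_i)(y)|| > ε for every i ∈ ℕ. Then E_2 contains a subspace isomorphic to c_0. -/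

import Mathlib

open Set ZeroAtInfty Ordinal

noncomputable section

/-- Iterated Cantor–Bendixson derivative, indexed by ordinals. -/
def cbDeriv {S : Type*} [TopologicalSpace S] (F : Set S) : Ordinal → Set S :=
  fun o => Ordinal.limitRecOn o F (fun _ ih => derivedSet ih)
    (fun o _ ih => ⋂ (β : {β // β < o}), ih β β.2)

/-- The function `f ⊗ e : x ↦ f x • e`. -/
def tensor {K : Type*} [TopologicalSpace K] {E : Type*} [NormedAddCommGroup E]
    [NormedSpace ℝ E] (f : C(K, ℝ)) (e : E) : C(K, E) :=
  ⟨fun x => f x • e, (map_continuous f).smul continuous_const⟩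

/-- `E` contains an isomorphic copy of `c₀`. -/
def ContainsCopyOfC0 (E : Type*) [NormedAddCommGroup E] [NormedSpace ℝ E] : Prop :=
  ∃ T : C₀(ℕ, ℝ) →L[ℝ] E, ∃ c > 0, ∀ x, c * ‖x‖ ≤ ‖T x‖

/-- The canonical scalar function space associated to `H ⊆ C(K,E)`:
the closed linear span of `{e* ∘ h : e* ∈ E*, h ∈ H}`. -/
def scalarSpace {K : Type*} [TopologicalSpace K] [CompactSpace K]
    {E : Type*} [NormedAddCommGroup E] [NormedSpace ℝ E]
    (H : Submodule ℝ C(K, E)) : Submodule ℝ C(K, ℝ) :=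
  (Submodule.span ℝ {f : C(K, ℝ) | ∃ φ : E →L[ℝ] ℝ, ∃ h ∈ H,
      f = ⟨fun x => φ (h x), φ.continuous.comp (map_continuous h)⟩}).topologicalClosure

/-- The evaluation functional `i(x) : A → ℝ`, `h ↦ h x`. -/
def evalFun {K : Type*} [TopologicalSpace K] [CompactSpace K]
    (A : Submodule ℝ C(K, ℝ)) (x : K) : ↥A →L[ℝ] ℝ :=
  LinearMap.mkContinuous
    { toFun := fun h => (h : C(K, ℝ)) x
      map_add' := fun a b => rfl
      map_smul' := fun c a => rfl } 1
    (fun h => by simpa using (h : C(K, ℝ)).norm_coe_le_norm x)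

/-- The Choquet boundary of `H ⊆ C(K,E)`: points whose evaluation functional is an
extreme point of the dual unit ball of the associated scalar space. -/
def ChoquetBoundary {K : Type*} [TopologicalSpace K] [CompactSpace K]
    {E : Type*} [NormedAddCommGroup E] [NormedSpace ℝ E]
    (H : Submodule ℝ C(K, E)) : Set K :=
  {x | evalFun (scalarSpace H) x ∈
      Set.extremePoints ℝ (@Metric.closedBall (↥(scalarSpace H) →L[ℝ] ℝ)
        (ContinuousLinearMap.toSeminormedAddCommGroup (E := ↥(scalarSpace H)) (F := ℝ) (𝕜 := ℝ)
          (𝕜₂ := ℝ) (σ₁₂ := RingHom.id ℝ)).toPseudoMetricSpace (0 : ↥(scalarSpace H) →L[ℝ] ℝ) 1)}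

/-- `A^E`: elements `f` of the scalar space with `f ⊗ e ∈ H` for all `e`. -/
def AE {K : Type*} [TopologicalSpace K] [CompactSpace K]
    {E : Type*} [NormedAddCommGroup E] [NormedSpace ℝ E]
    (H : Submodule ℝ C(K, E)) : Set C(K, ℝ) :=
  {f | f ∈ scalarSpace H ∧ ∀ e : E, tensor f e ∈ H}

/-- Weak peak point of `H ⊆ C(K,E)`. -/
def IsWeakPeakPoint {K : Type*} [TopologicalSpace K] [CompactSpace K]
    {E : Type*} [NormedAddCommGroup E] [NormedSpace ℝ E]
    (H : Submodule ℝ C(K, E)) (x : K) : Prop :=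
  ∀ U ∈ nhds x, ∀ ε ∈ Set.Ioo (0 : ℝ) 1, ∃ f ∈ AE H,
    (∀ y, f y ∈ Set.Icc (0 : ℝ) 1) ∧ 1 - ε < f x ∧
      ∀ y ∈ ChoquetBoundary H \ U, f y < ε

/-- `Ω_H = { y : ∃ g ∈ H, g y ≠ 0 }`. -/
def OmegaSet {K : Type*} [TopologicalSpace K] [CompactSpace K]
    {E : Type*} [NormedAddCommGroup E] [NormedSpace ℝ E]
    (H : Submodule ℝ C(K, E)) : Set K :=
  {y | ∃ g ∈ H, (g : C(K, E)) y ≠ 0}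

section C0Embed

variable {E : Type*} [NormedAddCommGroup E] [NormedSpace ℝ E] [CompleteSpace E]

theorem c0_bound1 (v : ℕ → E) (M : ℝ) [Nontrivial E]
    (hrow : ∀ φ : E →L[ℝ] ℝ, ‖φ‖ ≤ 1 → ∀ s : Finset ℕ, ∑ i ∈ s, |φ (v i)| ≤ M)
    (s : Finset ℕ) (m : ℕ → ℕ) (hm : Set.InjOn m s) (a : ℕ → ℝ) (B : ℝ) (hB : 0 ≤ B)
    (ha : ∀ j ∈ s, |a j| ≤ B) : ‖∑ j ∈ s, a j • v (m j)‖ ≤ M * B := by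
  obtain ⟨φ, hφ1, hφx⟩ := exists_dual_vector' ℝ (∑ j ∈ s, a j • v (m j))
  have hinj : ∀ x ∈ s, ∀ y ∈ s, m x = m y → x = y := fun x hx y hy hxy =>
    hm (Finset.mem_coe.2 hx) (Finset.mem_coe.2 hy) hxy
  calc ‖∑ j ∈ s, a j • v (m j)‖ = φ (∑ j ∈ s, a j • v (m j)) := by rw [hφx]; norm_cast
    _ = ∑ j ∈ s, a j * φ (v (m j)) := by rw [map_sum]; simp [_root_.smul_eq_mul]
    _ ≤ ∑ j ∈ s, |a j * φ (v (m j))| := Finset.sum_le_sum fun j _ => le_abs_self _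
    _ ≤ ∑ j ∈ s, B * |φ (v (m j))| := Finset.sum_le_sum fun j hj => by
        rw [abs_mul]; exact mul_le_mul_of_nonneg_right (ha j hj) (abs_nonneg _)
    _ = B * ∑ j ∈ s, |φ (v (m j))| := by rw [Finset.mul_sum]
    _ = B * ∑ i ∈ s.image m, |φ (v i)| := by rw [Finset.sum_image hinj]
    _ ≤ B * M := mul_le_mul_of_nonneg_left (hrow φ hφ1.le (s.image m)) hB
    _ = M * B := mul_comm _ _

theorem c0_row_summable (v : ℕ → E) (M : ℝ)
    (hrow : ∀ φ : E →L[ℝ] ℝ, ‖φ‖ ≤ 1 → ∀ s : Finset ℕ, ∑ i ∈ s, |φ (v i)| ≤ M)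
    (φ : E →L[ℝ] ℝ) (hφ : ‖φ‖ ≤ 1) : Summable fun i => |φ (v i)| :=
  summable_of_sum_range_le (fun _ => abs_nonneg _) (fun n => hrow φ hφ (Finset.range n))

theorem c0_norm_le (v : ℕ → E) (M : ℝ) [Nontrivial E]
    (hrow : ∀ φ : E →L[ℝ] ℝ, ‖φ‖ ≤ 1 → ∀ s : Finset ℕ, ∑ i ∈ s, |φ (v i)| ≤ M)
    (i : ℕ) : ‖v i‖ ≤ M := by
  have := c0_bound1 v M hrow {i} id (fun x _ y _ h => h) (fun _ => (1:ℝ)) 1 zero_le_one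
    (fun j _ => by norm_num)
  simpa using this

theorem c0_far (v : ℕ → E) (ε M : ℝ) (hε : 0 < ε)
    (hrow : ∀ φ : E →L[ℝ] ℝ, ‖φ‖ ≤ 1 → ∀ s : Finset ℕ, ∑ i ∈ s, |φ (v i)| ≤ M)
    (hlow : ∀ i, ε < ‖v i‖)
    (F : Submodule ℝ E) [FiniteDimensional ℝ F] :
    {n | ε/4 ≤ Metric.infDist (v n) (F : Set E)}.Infinite := by
  have hnt : Nontrivial E := ⟨⟨v 0, 0, fun h0 => by
    have := hlow 0; rw [h0, norm_zero] at this; linarith⟩⟩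
  have hM0 : 0 ≤ M := by simpa using hrow 0 (by simp) ∅
  by_contra hfin
  rw [Set.not_infinite] at hfin
  have hA : {n | Metric.infDist (v n) (F : Set E) < ε/4}.Infinite := by
    have := hfin.infinite_compl
    convert this using 1
    ext n; simp [not_le]
  -- choose approximants
  have hex : ∀ n, Metric.infDist (v n) (F : Set E) < ε/4 → ∃ w ∈ (F : Set E), ‖v n - w‖ < ε/4 := by
    intro n hn
    obtain ⟨w, hw, hd⟩ := (Metric.infDist_lt_iff ⟨0, F.zero_mem⟩).1 hn
    exact ⟨w, hw, by rwa [dist_eq_norm] at hd⟩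
  classical
  set A := {n | Metric.infDist (v n) (F : Set E) < ε/4} with hAdef
  let w : ℕ → E := fun n => if h : n ∈ A then (hex n h).choose else 0
  have hwF : ∀ n ∈ A, w n ∈ (F : Set E) := fun n hn => by
    simp only [w, dif_pos hn]; exact (hex n hn).choose_spec.1
  have hwd : ∀ n ∈ A, ‖v n - w n‖ < ε/4 := fun n hn => by
    simp only [w, dif_pos hn]; exact (hex n hn).choose_spec.2
  have hwb : ∀ n ∈ A, ‖w n‖ ≤ M + ε := by
    intro n hn
    have h1 : ‖w n‖ ≤ ‖v n‖ + ‖v n - w n‖ := by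
      calc ‖w n‖ = ‖v n - (v n - w n)‖ := by congr 1; abel
        _ ≤ ‖v n‖ + ‖v n - w n‖ := norm_sub_le _ _
    have := c0_norm_le v M hrow n
    have := hwd n hn
    linarith
  -- compactness
  have hcs : IsCompact (((↑) : F → E) '' Metric.closedBall (0 : F) (M + ε)) :=
    (isCompact_closedBall _ _).image continuous_subtype_val
  obtain ⟨t, ht⟩ := hcs.elim_finite_subcover (fun z : E => Metric.ball z (ε/8))
    (fun z => Metric.isOpen_ball)
    (fun x _ => Set.mem_iUnion.2 ⟨x, Metric.mem_ball_self (by positivity)⟩)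
  have hmem : ∀ n ∈ A, w n ∈ ((↑) : F → E) '' Metric.closedBall (0 : F) (M + ε) := by
    intro n hn
    refine ⟨⟨w n, hwF n hn⟩, ?_, rfl⟩
    rw [Metric.mem_closedBall, dist_zero_right]
    exact hwb n hn
  have hcov : ∀ n ∈ A, ∃ z ∈ t, ‖w n - z‖ < ε/8 := by
    intro n hn
    have := ht (hmem n hn)
    rw [Set.mem_iUnion₂] at this
    obtain ⟨z, hz, hball⟩ := this
    exact ⟨z, hz, by rwa [Metric.mem_ball, dist_eq_norm] at hball⟩
  let cc : ℕ → E := fun n => if h : n ∈ A then (hcov n h).choose else 0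
  have hcct : ∀ n ∈ A, cc n ∈ t ∧ ‖w n - cc n‖ < ε/8 := fun n hn => by
    simp only [cc, dif_pos hn]
    exact ⟨(hcov n hn).choose_spec.1, (hcov n hn).choose_spec.2⟩
  have hfib : ∃ z ∈ t, {n | n ∈ A ∧ cc n = z}.Infinite := by
    by_contra hcon
    push_neg at hcon
    have hsub : A ⊆ ⋃ z ∈ (t : Set E), {n | n ∈ A ∧ cc n = z} := by
      intro n hn
      exact Set.mem_biUnion (hcct n hn).1 ⟨hn, rfl⟩
    exact hA (Set.Finite.subset (Set.Finite.biUnion t.finite_toSet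
      (fun z hz => hcon z (by exact_mod_cast hz))) hsub)
  obtain ⟨z₀, _, hBinf⟩ := hfib
  set B := {n | n ∈ A ∧ cc n = z₀} with hBdef
  have hBdist : ∀ n ∈ B, ∀ m ∈ B, ‖v n - v m‖ < 3*ε/4 := by
    intro n hn m hm
    have h1 := hwd n hn.1
    have h2 := hwd m hm.1
    have h3 := (hcct n hn.1).2
    have h4 := (hcct m hm.1).2
    rw [hn.2] at h3; rw [hm.2] at h4
    have heq : v n - v m = (v n - w n) + (w n - z₀) + (z₀ - w m) + (w m - v m) := by abel
    calc ‖v n - v m‖ = ‖(v n - w n) + (w n - z₀) + (z₀ - w m) + (w m - v m)‖ := by rw [heq]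
      _ ≤ ‖(v n - w n) + (w n - z₀) + (z₀ - w m)‖ + ‖w m - v m‖ := norm_add_le _ _
      _ ≤ ‖(v n - w n) + (w n - z₀)‖ + ‖z₀ - w m‖ + ‖w m - v m‖ := by
          have := norm_add_le ((v n - w n) + (w n - z₀)) (z₀ - w m); linarith
      _ ≤ ‖v n - w n‖ + ‖w n - z₀‖ + ‖z₀ - w m‖ + ‖w m - v m‖ := by
          have := norm_add_le (v n - w n) (w n - z₀); linarith
      _ < 3*ε/4 := by
          rw [norm_sub_rev z₀ (w m), norm_sub_rev (w m) (v m)]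
          linarith
  obtain ⟨n₀, hn₀⟩ := hBinf.nonempty
  obtain ⟨φ, hφ1, hφx⟩ := exists_dual_vector ℝ (v n₀) (by
    intro h0
    have := hlow n₀; rw [h0] at this; linarith)
  have hφlow : ∀ n ∈ B, ε/4 < φ (v n) := by
    intro n hn
    have h1 : φ (v n₀) = ‖v n₀‖ := by exact_mod_cast hφx
    have h2 : φ (v n₀ - v n) ≤ ‖v n₀ - v n‖ := by
      calc φ (v n₀ - v n) ≤ |φ (v n₀ - v n)| := le_abs_self _
        _ ≤ ‖φ‖ * ‖v n₀ - v n‖ := φ.le_opNorm _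
        _ = ‖v n₀ - v n‖ := by rw [hφ1, one_mul]
    have h3 : ‖v n₀ - v n‖ < 3*ε/4 := hBdist n₀ hn₀ n hn
    have h4 : ε < ‖v n₀‖ := hlow n₀
    have h5 : φ (v n) = φ (v n₀) - φ (v n₀ - v n) := by
      rw [map_sub]; ring
    linarith
  -- contradiction via counting
  set N : ℕ := ⌈4*M/ε⌉₊ + 1 with hNdef
  obtain ⟨s, hsB, hscard⟩ := hBinf.exists_subset_card_eq N
  have hsum : (N : ℝ) * (ε/4) ≤ ∑ i ∈ s, |φ (v i)| := by
    calc (N:ℝ) * (ε/4) = ∑ _i ∈ s, (ε/4) := by rw [Finset.sum_const, hscard, _root_.nsmul_eq_mul]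
      _ ≤ ∑ i ∈ s, |φ (v i)| := Finset.sum_le_sum fun i hi => by
          have := hφlow i (hsB hi)
          have : ε/4 ≤ φ (v i) := this.le
          calc ε/4 ≤ φ (v i) := this
            _ ≤ |φ (v i)| := le_abs_self _
  have hle := hrow φ hφ1.le s
  have hNgt : 4*M/ε < (N:ℝ) := by
    have h1 := Nat.le_ceil (4*M/ε)
    have h2 : (⌈4*M/ε⌉₊ : ℝ) < (N:ℝ) := by exact_mod_cast Nat.lt_succ_self _
    linarith
  have hMlt : M < (N:ℝ) * (ε/4) := by
    have h := mul_lt_mul_of_pos_right hNgt (by positivity : (0:ℝ) < ε/4)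
    have heq : 4*M/ε * (ε/4) = M := by field_simp
    rw [heq] at h
    exact h
  linarith

end C0Embed
theorem c0_step {E : Type*} [NormedAddCommGroup E] [NormedSpace ℝ E] [CompleteSpace E]
    (v : ℕ → E) (ε M : ℝ) (hε : 0 < ε)
    (hrow : ∀ φ : E →L[ℝ] ℝ, ‖φ‖ ≤ 1 → ∀ s : Finset ℕ, ∑ i ∈ s, |φ (v i)| ≤ M)
    (hlow : ∀ i, ε < ‖v i‖)
    (k : ℕ) (prev : Fin k → ℕ × {φ : E →L[ℝ] ℝ // ‖φ‖ ≤ 1}) :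
    ∃ p : ℕ × {φ : E →L[ℝ] ℝ // ‖φ‖ ≤ 1},
      (∀ j, (prev j).1 < p.1) ∧ (ε/4 ≤ p.2.1 (v p.1)) ∧
      (∀ j, p.2.1 (v (prev j).1) = 0) ∧
      (∀ j, ∑' i, |(prev j).2.1 (v (i + p.1))| ≤ ε/16 * (1/2)^k) := by
  classical
  have hbnd : 0 < ε/16 * (1/2:ℝ)^k := by positivity
  -- tails of previous rows
  have htail : ∀ j : Fin k, ∃ N, ∀ m ≥ N,
      ∑' i, |(prev j).2.1 (v (i + m))| ≤ ε/16 * (1/2)^k := by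
    intro j
    have hs := c0_row_summable v M hrow (prev j).2.1 (prev j).2.2
    have ht := tendsto_sum_nat_add (fun i => |(prev j).2.1 (v i)|)
    have hev := ht.eventually_lt_const hbnd
    obtain ⟨N, hN⟩ := Filter.eventually_atTop.1 hev
    exact ⟨N, fun m hm => (hN m hm).le⟩
  set N₀ : ℕ := Finset.univ.sup (fun j : Fin k => max ((htail j).choose) ((prev j).1 + 1)) with hN₀
  -- the finite-dimensional subspace spanned by the previous vectors
  set F : Submodule ℝ E := Submodule.span ℝ (Set.range fun j : Fin k => v (prev j).1) with hF
  haveI : FiniteDimensional ℝ F := FiniteDimensional.span_of_finite ℝ (Set.finite_range _)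
  have hfar := c0_far v ε M hε hrow hlow F
  obtain ⟨n₀, hn₀mem⟩ := (hfar.diff (Set.finite_lt_nat N₀)).nonempty
  have hn₀d : ε/4 ≤ Metric.infDist (v n₀) (F : Set E) := hn₀mem.1
  have hn₀ge : N₀ ≤ n₀ := not_lt.1 hn₀mem.2
  -- quotient functional
  haveI : IsClosed (F : Set E) := F.closed_of_finiteDimensional
  have hπle : ∀ x : E, ‖(Submodule.Quotient.mk x : E ⧸ F)‖ ≤ ‖x‖ := fun x =>
    Submodule.Quotient.norm_mk_le F x
  have hmknorm : ε/4 ≤ ‖(Submodule.Quotient.mk (v n₀) : E ⧸ F)‖ := by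
    by_contra hcon
    push_neg at hcon
    have hδ : 0 < ε/4 - ‖(Submodule.Quotient.mk (v n₀) : E ⧸ F)‖ := by linarith
    obtain ⟨a, ha1, ha2⟩ := Submodule.Quotient.norm_mk_lt
      (Submodule.Quotient.mk (v n₀) : E ⧸ F) hδ
    have haF : v n₀ - a ∈ F := by
      rw [← Submodule.Quotient.eq]
      exact ha1.symm
    have : Metric.infDist (v n₀) (F : Set E) ≤ ‖a‖ := by
      calc Metric.infDist (v n₀) (F : Set E) ≤ dist (v n₀) (v n₀ - a) :=
            Metric.infDist_le_dist_of_mem (show v n₀ - a ∈ (F : Set E) from haF)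
        _ = ‖a‖ := by rw [dist_eq_norm]; congr 1; abel
    linarith
  have hmkne : (Submodule.Quotient.mk (v n₀) : E ⧸ F) ≠ 0 := by
    intro h0
    rw [h0, norm_zero] at hmknorm
    linarith
  obtain ⟨g, hg1, hg2⟩ := exists_dual_vector ℝ (Submodule.Quotient.mk (v n₀) : E ⧸ F) (norm_ne_zero_iff.2 hmkne)
  let πC : E →L[ℝ] E ⧸ F := LinearMap.mkContinuous F.mkQ 1
    (fun x => by simpa using hπle x)
  let φ : E →L[ℝ] ℝ := g.comp πC
  have hπapp : ∀ x : E, πC x = (Submodule.Quotient.mk x : E ⧸ F) := fun x => rfl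
  have hφn : ‖φ‖ ≤ 1 := by
    apply ContinuousLinearMap.opNorm_le_bound _ zero_le_one
    intro x
    calc ‖φ x‖ = ‖g (Submodule.Quotient.mk x : E ⧸ F)‖ := by rw [ContinuousLinearMap.comp_apply, hπapp]
      _ ≤ ‖g‖ * ‖(Submodule.Quotient.mk x : E ⧸ F)‖ := g.le_opNorm _
      _ ≤ 1 * ‖x‖ := by
          rw [hg1, one_mul]
          calc ‖(Submodule.Quotient.mk x : E ⧸ F)‖ ≤ ‖x‖ := hπle x
            _ ≤ 1 * ‖x‖ := by rw [one_mul]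
  refine ⟨(n₀, ⟨φ, hφn⟩), ?_, ?_, ?_, ?_⟩
  · intro j
    have h1 : max ((htail j).choose) ((prev j).1 + 1) ≤ N₀ :=
      hN₀ ▸ Finset.le_sup (f := fun j : Fin k => max ((htail j).choose) ((prev j).1 + 1))
        (Finset.mem_univ j)
    have h2 : (prev j).1 + 1 ≤ n₀ := le_trans (le_trans (le_max_right _ _) h1) hn₀ge
    omega
  · show ε/4 ≤ φ (v n₀)
    have : φ (v n₀) = g (Submodule.Quotient.mk (v n₀) : E ⧸ F) := by
      rw [ContinuousLinearMap.comp_apply, hπapp]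
    rw [this, hg2]
    exact_mod_cast hmknorm
  · intro j
    show φ (v (prev j).1) = 0
    have hmem : v (prev j).1 ∈ F := Submodule.subset_span ⟨j, rfl⟩
    have : (Submodule.Quotient.mk (v (prev j).1) : E ⧸ F) = 0 :=
      (Submodule.Quotient.mk_eq_zero F).2 hmem
    rw [ContinuousLinearMap.comp_apply, hπapp, this, map_zero]
  · intro j
    apply (htail j).choose_spec n₀
    have h1 : max ((htail j).choose) ((prev j).1 + 1) ≤ N₀ :=
      hN₀ ▸ Finset.le_sup (f := fun j : Fin k => max ((htail j).choose) ((prev j).1 + 1))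
        (Finset.mem_univ j)
    exact le_trans (le_trans (le_max_left _ _) h1) hn₀ge
theorem c0_seq {E : Type*} [NormedAddCommGroup E] [NormedSpace ℝ E] [CompleteSpace E]
    (v : ℕ → E) (ε M : ℝ) (hε : 0 < ε)
    (hrow : ∀ φ : E →L[ℝ] ℝ, ‖φ‖ ≤ 1 → ∀ s : Finset ℕ, ∑ i ∈ s, |φ (v i)| ≤ M)
    (hlow : ∀ i, ε < ‖v i‖) :
    ∃ (n : ℕ → ℕ) (φ : ℕ → E →L[ℝ] ℝ),
      (∀ j k, j < k → n j < n k) ∧ (∀ k, ‖φ k‖ ≤ 1) ∧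
      (∀ k, ε/4 ≤ φ k (v (n k))) ∧ (∀ j k, j < k → φ k (v (n j)) = 0) ∧
      (∀ j k, j < k → ∑' i, |φ j (v (i + n k))| ≤ ε/16 * (1/2)^k) := by
  classical
  let St := ℕ × {φ : E →L[ℝ] ℝ // ‖φ‖ ≤ 1}
  have pickex := c0_step v ε M hε hrow hlow
  let pick : ∀ k, (Fin k → St) → St := fun k prev => (pickex k prev).choose
  have hpick : ∀ k (prev : Fin k → St),
      (∀ j, (prev j).1 < (pick k prev).1) ∧ (ε/4 ≤ (pick k prev).2.1 (v (pick k prev).1)) ∧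
      (∀ j, (pick k prev).2.1 (v (prev j).1) = 0) ∧
      (∀ j, ∑' i, |(prev j).2.1 (v (i + (pick k prev).1))| ≤ ε/16 * (1/2)^k) :=
    fun k prev => (pickex k prev).choose_spec
  let Fc : ∀ k, Fin k → St := fun k =>
    Nat.rec (motive := fun k => Fin k → St) Fin.elim0
      (fun k ih => Fin.snoc ih (pick k ih)) k
  have hFc : ∀ k, Fc (k+1) = Fin.snoc (Fc k) (pick k (Fc k)) := fun k => rfl
  let sq : ℕ → St := fun k => Fc (k+1) (Fin.last k)
  have coh : ∀ k (j : Fin k), Fc k j = sq j := by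
    intro k
    induction k with
    | zero => exact fun j => j.elim0
    | succ k ih =>
      intro j
      induction j using Fin.lastCases with
      | last => simp only [Fin.val_last]; rfl
      | cast i =>
        rw [hFc, Fin.snoc_castSucc]
        simpa using ih i
  have hsq : ∀ k, sq k = pick k (fun j : Fin k => sq j) := by
    intro k
    have hfe : Fc k = fun j : Fin k => sq j := funext (coh k)
    have h1 : sq k = (Fin.snoc (Fc k) (pick k (Fc k)) : Fin (k+1) → St) (Fin.last k) := rfl
    rw [h1, Fin.snoc_last, hfe]
  refine ⟨fun k => (sq k).1, fun k => (sq k).2.1, ?_, fun k => (sq k).2.2, ?_, ?_, ?_⟩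
  · intro j k hjk
    have := (hpick k (fun j : Fin k => sq j)).1 ⟨j, hjk⟩
    rwa [← hsq k] at this
  · intro k
    have := (hpick k (fun j : Fin k => sq j)).2.1
    rwa [← hsq k] at this
  · intro j k hjk
    have := (hpick k (fun j : Fin k => sq j)).2.2.1 ⟨j, hjk⟩
    rwa [← hsq k] at this
  · intro j k hjk
    have := (hpick k (fun j : Fin k => sq j)).2.2.2 ⟨j, hjk⟩
    rwa [← hsq k] at this
theorem c0_embed {E : Type*} [NormedAddCommGroup E] [NormedSpace ℝ E] [CompleteSpace E]
    (v : ℕ → E) (ε M : ℝ) (hε : 0 < ε)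
    (hrow : ∀ φ : E →L[ℝ] ℝ, ‖φ‖ ≤ 1 → ∀ s : Finset ℕ, ∑ i ∈ s, |φ (v i)| ≤ M)
    (hlow : ∀ i, ε < ‖v i‖) : ContainsCopyOfC0 E := by
  classical
  have hnt : Nontrivial E := ⟨⟨v 0, 0, fun h0 => by
    have := hlow 0; rw [h0, norm_zero] at this; linarith⟩⟩
  have hM0 : 0 ≤ M := by simpa using hrow 0 (by simp) ∅
  obtain ⟨n, φf, hmono, hφ1, hφd, hφ0, hφtail⟩ := c0_seq v ε M hε hrow hlow
  have hsm : StrictMono n := strictMono_nat_of_lt_succ (fun k => hmono k (k+1) (Nat.lt_succ_self k))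
  have hninj : Function.Injective n := hsm.injective
  have hxb : ∀ (x : C₀(ℕ, ℝ)) (j : ℕ), |x j| ≤ ‖x‖ := by
    intro x j
    have h1 : ‖x.toBCF j‖ ≤ ‖x.toBCF‖ := BoundedContinuousFunction.norm_coe_le_norm _ j
    rw [ZeroAtInftyContinuousMap.norm_toBCF_eq_norm] at h1
    exact le_trans (le_of_eq (Real.norm_eq_abs (x j)).symm) h1
  -- summability
  have hsumm : ∀ x : C₀(ℕ, ℝ), Summable (fun j => x j • v (n j)) := by
    intro x
    rw [summable_iff_vanishing_norm]
    intro δ hδ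
    have hMδ : 0 < δ/(M+1) := by positivity
    have hxtend : Filter.Tendsto (fun j => x j) Filter.atTop (nhds 0) := by
      have := zero_at_infty x
      rwa [Filter.cocompact_eq_cofinite, Nat.cofinite_eq_atTop] at this
    have hev : ∀ᶠ j in Filter.atTop, |x j| < δ/(M+1) := by
      have := hxtend.eventually (Metric.ball_mem_nhds (0:ℝ) hMδ)
      simpa [Real.dist_eq] using this
    obtain ⟨N, hN⟩ := Filter.eventually_atTop.1 hev
    refine ⟨Finset.range N, fun t ht => ?_⟩
    have hb : ∀ j ∈ t, |x j| ≤ δ/(M+1) := by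
      intro j hj
      have hnotin : j ∉ Finset.range N := fun hmem => (Finset.disjoint_left.1 ht) hj hmem
      exact (hN j (Nat.le_of_not_lt (fun hlt => hnotin (Finset.mem_range.2 hlt)))).le
    calc ‖∑ j ∈ t, x j • v (n j)‖ ≤ M * (δ/(M+1)) :=
          c0_bound1 v M hrow t n (Set.injOn_of_injective hninj) (fun j => x j) (δ/(M+1))
            hMδ.le hb
      _ < δ := by
          have h1 : M * (δ/(M+1)) = δ * (M/(M+1)) := by ring
          have h2 : M/(M+1) < 1 := (div_lt_one (by linarith)).2 (by linarith)
          calc M * (δ/(M+1)) = δ * (M/(M+1)) := h1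
            _ < δ * 1 := by apply mul_lt_mul_of_pos_left h2 hδ
            _ = δ := mul_one δ
  -- the operator
  let SL : C₀(ℕ, ℝ) →ₗ[ℝ] E :=
    { toFun := fun x => ∑' j, x j • v (n j)
      map_add' := fun x y => by
        simp only [ZeroAtInftyContinuousMap.coe_add, Pi.add_apply, add_smul]
        exact Summable.tsum_add (hsumm x) (hsumm y)
      map_smul' := fun c x => by
        simp only [RingHom.id_apply]
        calc ∑' j, ((c • x) j) • v (n j) = ∑' j, c • (x j • v (n j)) :=
              tsum_congr (fun j => by
                simp only [ZeroAtInftyContinuousMap.coe_smul, Pi.smul_apply, smul_smul,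
                  _root_.smul_eq_mul])
          _ = c • ∑' j, x j • v (n j) := ((hsumm x).hasSum.const_smul c).tsum_eq }
  have hSb : ∀ x : C₀(ℕ, ℝ), ‖SL x‖ ≤ M * ‖x‖ := by
    intro x
    have ht : Filter.Tendsto (fun s : Finset ℕ => ‖∑ j ∈ s, x j • v (n j)‖)
        Filter.atTop (nhds ‖SL x‖) := (hsumm x).hasSum.norm
    exact le_of_tendsto ht (Filter.Eventually.of_forall fun s =>
      c0_bound1 v M hrow s n (Set.injOn_of_injective hninj) (fun j => x j) ‖x‖
        (norm_nonneg x) (fun j _ => hxb x j))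
  let S : C₀(ℕ, ℝ) →L[ℝ] E := LinearMap.mkContinuous SL M hSb
  have hSapp : ∀ x : C₀(ℕ, ℝ), S x = ∑' j, x j • v (n j) := fun x => rfl
  refine ⟨S, ε/8, by positivity, ?_⟩
  intro x
  -- key estimate for every coordinate
  have key : ∀ k : ℕ, |x k| * (ε/4) ≤ ‖S x‖ + ‖x‖ * (ε/8) := by
    intro k
    have hsum2 : Summable (fun j => x j * φf k (v (n j))) := by
      have h1 := ((hsumm x).hasSum.mapL (φf k)).summable
      apply h1.congr
      intro j
      simp [_root_.smul_eq_mul]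
    have hmap : φf k (S x) = ∑' j, x j * φf k (v (n j)) := by
      rw [hSapp, (φf k).map_tsum (hsumm x)]
      congr 1
      funext j
      simp [_root_.smul_eq_mul]
    have hsplit := Summable.tsum_eq_add_tsum_ite hsum2 k
    -- pointwise bound on off-diagonal terms
    have hpt : ∀ j : ℕ, |(if j = k then 0 else x j * φf k (v (n j)))|
        ≤ ‖x‖ * (ε/16) * (1/2)^j := by
      intro j
      rcases eq_or_ne j k with rfl | hjk
      · rw [if_pos rfl, abs_zero]
        positivity
      · rw [if_neg hjk]
        rcases lt_or_gt_of_ne hjk with hlt | hgt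
        · -- j < k : functional vanishes
          rw [hφ0 j k hlt, mul_zero, abs_zero]
          positivity
        · -- k < j : tail estimate
          have htail1 : |φf k (v (n j))| ≤ ε/16 * (1/2)^j := by
            have hs : Summable (fun i => |φf k (v (i + n j))|) := by
              have h2 := c0_row_summable v M hrow (φf k) (hφ1 k)
              exact (summable_nat_add_iff (f := fun i => |φf k (v i)|) (n j)).2 h2
            have h0 : |φf k (v (0 + n j))| ≤ ∑' i, |φf k (v (i + n j))| :=
              Summable.le_tsum (f := fun i => |φf k (v (i + n j))|) hs 0 (fun i _ => abs_nonneg _)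
            have h1 := hφtail k j hgt
            rw [zero_add] at h0
            linarith
          rw [abs_mul]
          calc |x j| * |φf k (v (n j))| ≤ ‖x‖ * (ε/16 * (1/2)^j) :=
                mul_le_mul (hxb x j) htail1 (abs_nonneg _) (norm_nonneg x)
            _ = ‖x‖ * (ε/16) * (1/2)^j := by ring
    have hgeo : Summable (fun j : ℕ => ‖x‖ * (ε/16) * (1/2)^j) :=
      summable_geometric_two.mul_left _
    have hsumabs : Summable (fun j => |(if j = k then 0 else x j * φf k (v (n j)))|) :=
      Summable.of_nonneg_of_le (fun j => abs_nonneg _) hpt hgeo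
    have habs : |∑' j, (if j = k then 0 else x j * φf k (v (n j)))| ≤ ‖x‖ * (ε/8) := by
      calc |∑' j, (if j = k then 0 else x j * φf k (v (n j)))|
          ≤ ∑' j, |(if j = k then 0 else x j * φf k (v (n j)))| := by
            have := norm_tsum_le_tsum_norm (f := fun j => (if j = k then 0 else x j * φf k (v (n j)))) (by simpa [Real.norm_eq_abs] using hsumabs)
            simpa [Real.norm_eq_abs] using this
        _ ≤ ∑' j, ‖x‖ * (ε/16) * (1/2)^j := Summable.tsum_le_tsum hpt hsumabs hgeo
        _ = ‖x‖ * (ε/16) * ∑' j : ℕ, (1/2:ℝ)^j := by rw [tsum_mul_left]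
        _ = ‖x‖ * (ε/16) * 2 := by rw [tsum_geometric_two]
        _ = ‖x‖ * (ε/8) := by ring
    have hdiag : |x k| * (ε/4) ≤ |x k * φf k (v (n k))| := by
      rw [abs_mul]
      have h1 : ε/4 ≤ |φf k (v (n k))| := le_trans (hφd k) (le_abs_self _)
      exact mul_le_mul_of_nonneg_left h1 (abs_nonneg _)
    have hup : |φf k (S x)| ≤ ‖S x‖ := by
      calc |φf k (S x)| ≤ ‖φf k‖ * ‖S x‖ := (φf k).le_opNorm _
        _ ≤ 1 * ‖S x‖ := mul_le_mul_of_nonneg_right (hφ1 k) (norm_nonneg _)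
        _ = ‖S x‖ := one_mul _
    have heq2 : x k * φf k (v (n k)) = φf k (S x) - ∑' j, (if j = k then 0 else x j * φf k (v (n j))) := by
      rw [hmap, hsplit]; ring
    have : |x k * φf k (v (n k))| ≤ ‖S x‖ + ‖x‖ * (ε/8) := by
      rw [heq2]
      calc |φf k (S x) - ∑' j, (if j = k then 0 else x j * φf k (v (n j)))|
          ≤ |φf k (S x)| + |∑' j, (if j = k then 0 else x j * φf k (v (n j)))| := abs_sub _ _
        _ ≤ ‖S x‖ + ‖x‖ * (ε/8) := add_le_add hup habs
    linarith
  -- norm is approximately attained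
  have hattain : ∀ δ : ℝ, 0 < δ → ∃ k, ‖x‖ - δ ≤ |x k| := by
    intro δ hδ
    by_contra hcon
    push_neg at hcon
    have h0 : 0 ≤ ‖x‖ - δ := le_trans (abs_nonneg (x 0)) (hcon 0).le
    have : ‖x‖ ≤ ‖x‖ - δ := by
      rw [← ZeroAtInftyContinuousMap.norm_toBCF_eq_norm]
      refine (BoundedContinuousFunction.norm_le h0).2 fun j => ?_
      simpa [Real.norm_eq_abs] using (hcon j).le
    linarith
  have hmain : ‖x‖ * (ε/4) ≤ ‖S x‖ + ‖x‖ * (ε/8) := by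
    apply le_of_forall_pos_le_add
    intro η hη
    obtain ⟨k, hk⟩ := hattain (η / (ε/4)) (by positivity)
    have h1 := key k
    have h2 : (‖x‖ - η/(ε/4)) * (ε/4) ≤ |x k| * (ε/4) :=
      mul_le_mul_of_nonneg_right hk (by positivity)
    have h3 : (‖x‖ - η/(ε/4)) * (ε/4) = ‖x‖ * (ε/4) - η := by
      field_simp
    linarith
  have hnn : 0 ≤ ‖x‖ := norm_nonneg x
  nlinarith [hmain]

/-- Lemma 2.1 (c₀-lemma). -/
theorem stmt_3 {K₁ K₂ : Type*} [TopologicalSpace K₁] [CompactSpace K₁] [T2Space K₁]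
    [TopologicalSpace K₂] [CompactSpace K₂] [T2Space K₂]
    {E₁ E₂ : Type*} [NormedAddCommGroup E₁] [NormedSpace ℝ E₁] [CompleteSpace E₁]
    [NormedAddCommGroup E₂] [NormedSpace ℝ E₂] [CompleteSpace E₂]
    (H₁ : Submodule ℝ C(K₁, E₁)) (hH₁ : IsClosed (H₁ : Set C(K₁, E₁)))
    (H₂ : Submodule ℝ C(K₂, E₂)) (hH₂ : IsClosed (H₂ : Set C(K₂, E₂)))
    (T : ↥H₁ →L[ℝ] ↥H₂) (c : ℝ) (hc : 0 < c) (hT : ∀ h : ↥H₁, c * ‖h‖ ≤ ‖T h‖)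
    (e : E₁) (he : e ≠ 0) (f : ℕ → C(K₁, ℝ))
    (h : ℕ → ↥H₁) (hhf : ∀ i, (h i : C(K₁, E₁)) = tensor (f i) e)
    (C : ℝ)
    (hC : ∀ n : ℕ, ∀ α : Fin n → ℝ, (∀ i, α i = 1 ∨ α i = -1) →
      ‖∑ i, α i • h i‖ < C)
    (y : K₂) (ε : ℝ) (hε : 0 < ε)
    (hbig : ∀ i : ℕ, ε < ‖(T (h i) : C(K₂, E₂)) y‖) :
    ContainsCopyOfC0 E₂ := by
  classical
  set v : ℕ → E₂ := fun i => (T (h i) : C(K₂, E₂)) y with hv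
  refine c0_embed v ε (‖T‖ * C) hε ?_ hbig
  intro φ hφ s
  set N : ℕ := s.sup id + 1 with hN
  have h1 : ∑ i ∈ s, |φ (v i)| ≤ ∑ i ∈ Finset.range N, |φ (v i)| := by
    apply Finset.sum_le_sum_of_subset_of_nonneg
    · intro i hi
      exact Finset.mem_range.2 (Nat.lt_succ_of_le (Finset.le_sup (f := id) hi))
    · intro i _ _
      exact abs_nonneg _
  set α : Fin N → ℝ := fun i => if 0 ≤ φ (v i) then 1 else -1 with hα
  have hαval : ∀ i, α i = 1 ∨ α i = -1 := fun i => by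
    by_cases h' : 0 ≤ φ (v i)
    · left; simp [hα, h']
    · right; simp [hα, h']
  set g : ↥H₁ := ∑ i : Fin N, α i • h i with hg
  have hgn : ‖g‖ ≤ C := (hC N α hαval).le
  have heval : ((T g : C(K₂, E₂))) y = ∑ i : Fin N, α i • v i := by
    have h2 : T g = ∑ i : Fin N, α i • T (h i) := by
      rw [hg, map_sum]
      simp only [map_smul]
    rw [h2]
    have h3 : ((∑ i : Fin N, α i • T (h i) : ↥H₂) : C(K₂, E₂))
        = ∑ i : Fin N, α i • ((T (h i) : ↥H₂) : C(K₂, E₂)) := by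
      push_cast
      rfl
    rw [h3]
    simp [hv]
  have h2 : ∑ i ∈ Finset.range N, |φ (v i)| = φ (((T g : C(K₂, E₂))) y) := by
    rw [heval, map_sum, ← Fin.sum_univ_eq_sum_range (fun i => |φ (v i)|) N]
    apply Finset.sum_congr rfl
    intro i _
    by_cases h' : 0 ≤ φ (v i)
    · simp [hα, h', abs_of_nonneg h']
    · push_neg at h'
      simp [hα, not_le.2 h', abs_of_neg h']
  have h3 : φ (((T g : C(K₂, E₂))) y) ≤ ‖T‖ * C := by
    have hTg : ‖((T g : C(K₂, E₂))) y‖ ≤ ‖T g‖ :=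
      ContinuousMap.norm_coe_le_norm (T g : C(K₂, E₂)) y
    calc φ (((T g : C(K₂, E₂))) y) ≤ |φ (((T g : C(K₂, E₂))) y)| := le_abs_self _
      _ ≤ ‖φ‖ * ‖((T g : C(K₂, E₂))) y‖ := φ.le_opNorm _
      _ ≤ 1 * ‖T g‖ := mul_le_mul hφ hTg (norm_nonneg _) zero_le_one
      _ = ‖T g‖ := one_mul _
      _ ≤ ‖T‖ * ‖g‖ := T.le_opNorm g
      _ ≤ ‖T‖ * C := mul_le_mul_of_nonneg_left hgn (norm_nonneg T)
  linarith
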